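/- arXiv:1608.00757 — 2 statements merged into one kernel-verified Lean document; each statement's English description precedes it below -/
import Mathlib

section
/- Let Z_1,...,Z_N be i.i.d. real random variables with finite second moment and mean μ. Fix δ ∈ [e^{1-N/2}, 1), set n = ⌈ln(1/δ)⌉, partition {1,...,N} into n blocks I_1,...,I_n each of cardinality at least ⌊N/n⌋ ≥ 2, let W_j be the sample mean over block I_j, and let μ̂ be the median of W_1,...,W_n. Then for any N ≥ 4, P(|μ̂ − μ| > 2e√(2·Var(Z)) · √((1 + ln(1/δ))/N)) ≤ δ. -/
open MeasureTheory ProbabilityTheory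

/-- The median-of-means estimator: for i.i.d. square-integrable `Z₁,...,Z_N` with mean `m`,
`δ ∈ [e^{1-N/2},1)`, `n = ⌈ln(1/δ)⌉` blocks each of size at least `⌊N/n⌋ ≥ 2`, the median
`μ̂` of the block means satisfies
`P(|μ̂ - m| > 2e√(2 Var(Z)) √((1+ln(1/δ))/N)) ≤ δ`. -/
theorem median_of_means_deviation
    {Ω : Type*} [MeasurableSpace Ω] (P : Measure Ω) [IsProbabilityMeasure P]
    (N : ℕ) (hN : 4 ≤ N) (Z : Fin N → Ω → ℝ)
    (hmeas : ∀ i, Measurable (Z i))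
    (hZ2 : MemLp (Z ⟨0, by omega⟩) 2 P)
    (hiid : iIndepFun Z P)
    (hid : ∀ i, P.map (Z i) = P.map (Z ⟨0, by omega⟩))
    (m : ℝ) (hmean : ∀ i, ∫ ω, Z i ω ∂P = m)
    (δ : ℝ) (hδ : δ ∈ Set.Ico (Real.exp (1 - (N:ℝ) / 2)) 1)
    (n : ℕ) (hn : n = ⌈Real.log (1 / δ)⌉₊)
    (I : Fin n → Finset (Fin N))
    (hdisj : ∀ j k, j ≠ k → Disjoint (I j) (I k))
    (hcover : ∀ i : Fin N, ∃ j, i ∈ I j)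
    (hsize : ∀ j, N / n ≤ (I j).card) (hblock : 2 ≤ N / n)
    (W : Fin n → Ω → ℝ)
    (hW : ∀ j ω, W j ω = (1 / ((I j).card : ℝ)) * ∑ i ∈ I j, Z i ω)
    (μhat : Ω → ℝ)
    (hmed : ∀ ω : Ω,
      n ≤ 2 * (Finset.univ.filter fun j => W j ω ≤ μhat ω).card ∧
      n ≤ 2 * (Finset.univ.filter fun j => μhat ω ≤ W j ω).card) :
    P {ω | 2 * Real.exp 1 * Real.sqrt (2 * variance (Z ⟨0, by omega⟩) P)
            * Real.sqrt ((1 + Real.log (1 / δ)) / N) < |μhat ω - m|}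
      ≤ ENNReal.ofReal δ := by
  classical
  set Z0 := Z ⟨0, by omega⟩ with hZ0
  set σ2 := variance Z0 P with hσ2
  set L := Real.log (1 / δ) with hLdef
  set e := Real.exp 1 with he
  set t := 2 * e * Real.sqrt (2 * σ2) * Real.sqrt ((1 + L) / N) with ht
  have δpos : 0 < δ := lt_of_lt_of_le (Real.exp_pos _) hδ.1
  have δlt : δ < 1 := hδ.2
  have hepos : 0 < e := Real.exp_pos 1
  have Lpos : 0 < L := Real.log_pos (by rw [lt_div_iff₀ δpos]; linarith)
  have npos : 0 < n := by rw [hn]; exact Nat.ceil_pos.mpr Lpos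
  have hLn : L ≤ n := by rw [hn]; exact Nat.le_ceil L
  have hnL1 : (n : ℝ) < L + 1 := by rw [hn]; exact Nat.ceil_lt_add_one Lpos.le
  have Npos : 0 < N := by omega
  have tnonneg : 0 ≤ t := by positivity
  have hid' : ∀ i, IdentDistrib (Z i) Z0 P P := fun i =>
    ⟨(hmeas i).aemeasurable, (hmeas _).aemeasurable, hid i⟩
  have hmem : ∀ i, MemLp (Z i) 2 P := fun i => (hid' i).symm.memLp_snd hZ2
  have cpos : ∀ j, 0 < (I j).card := fun j => lt_of_lt_of_le (by omega) (hsize j)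
  have ccast : ∀ j, ((I j).card : ℝ) ≠ 0 := fun j => Nat.cast_ne_zero.mpr (cpos j).ne'
  rcases eq_or_lt_of_le (variance_nonneg Z0 P) with hσ0 | hσpos
  · have hm0 : ∫ ω, Z0 ω ∂P = m := hmean _
    have h0 : evariance Z0 P = 0 := by
      rw [← hZ2.ofReal_variance_eq, ← hσ0]; simp
    have hae0 : ∀ᵐ ω ∂P, Z0 ω = m := by
      filter_upwards [(evariance_eq_zero_iff (hmeas _).aemeasurable).mp h0] with ω hω
      exact hω.trans hm0
    have hsm : MeasurableSet ({m}ᶜ : Set ℝ) := (measurableSet_singleton m).compl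
    have hconst : ∀ᵐ ω ∂P, ∀ i, Z i ω = m := by
      rw [ae_all_iff]
      intro i
      have h1 : P (Z i ⁻¹' {m}ᶜ) = P (Z0 ⁻¹' {m}ᶜ) := by
        rw [← Measure.map_apply (hmeas i) hsm, hid i, Measure.map_apply (hmeas _) hsm]
      have h2 : P (Z0 ⁻¹' {m}ᶜ) = 0 := ae_iff.mp hae0
      exact ae_iff.mpr (h1.trans h2)
    have hnull : P {ω | ¬ ∀ i, Z i ω = m} = 0 := ae_iff.mp hconst
    have hsub : {ω | t < |μhat ω - m|} ⊆ {ω | ¬ ∀ i, Z i ω = m} := by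
      intro ω hω
      simp only [Set.mem_setOf_eq] at hω ⊢
      intro hall
      have hWm : ∀ j, W j ω = m := by
        intro j
        rw [hW j, Finset.sum_congr rfl fun i _ => hall i, Finset.sum_const, nsmul_eq_mul]
        have := ccast j
        field_simp
      obtain ⟨j1, hj1⟩ : (Finset.univ.filter fun j => W j ω ≤ μhat ω).Nonempty := by
        rw [← Finset.card_pos]; have := (hmed ω).1; omega
      obtain ⟨j2, hj2⟩ : (Finset.univ.filter fun j => μhat ω ≤ W j ω).Nonempty := by
        rw [← Finset.card_pos]; have := (hmed ω).2; omega
      simp only [Finset.mem_filter, Finset.mem_univ, true_and] at hj1 hj2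
      have h1 : μhat ω = m := by
        rw [hWm j1] at hj1; rw [hWm j2] at hj2; linarith
      rw [h1, sub_self, abs_zero] at hω
      linarith
    calc P {ω | t < |μhat ω - m|} = 0 := measure_mono_null hsub hnull
      _ ≤ ENNReal.ofReal δ := zero_le
  · set k := (n + 1) / 2 with hk
    have hkn : k ≤ n := by omega
    have h2k : n ≤ 2 * k := by omega
    set Cset : Set ℝ := {x | t < |x - m|} with hC
    have hCmeas : MeasurableSet Cset :=
      measurableSet_lt measurable_const ((measurable_id.sub_const m).abs)
    have h1L : (0:ℝ) < 1 + L := by linarith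
    have tpos : 0 < t := by
      have h1 : (0:ℝ) < 2 * σ2 := by linarith
      have h2 : (0:ℝ) < (1 + L) / N := div_pos h1L (Nat.cast_pos.mpr Npos)
      exact mul_pos (mul_pos (mul_pos two_pos hepos) (Real.sqrt_pos.mpr h1))
        (Real.sqrt_pos.mpr h2)
    have hWmem : ∀ j, MemLp (W j) 2 P := by
      intro j
      have hfun : W j = fun ω => (1 / ((I j).card : ℝ)) * ∑ i ∈ I j, Z i ω := funext (hW j)
      rw [hfun]
      exact (memLp_finset_sum (I j) fun i _ => hmem i).const_mul _
    have hEW : ∀ j, ∫ ω, W j ω ∂P = m := by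
      intro j
      have hfun : W j = fun ω => (1 / ((I j).card : ℝ)) * ∑ i ∈ I j, Z i ω := funext (hW j)
      rw [hfun, integral_const_mul,
        integral_finset_sum _ fun i _ => (hmem i).integrable one_le_two]
      simp_rw [hmean]
      rw [Finset.sum_const, nsmul_eq_mul]
      have := ccast j
      field_simp
    have hVarW : ∀ j, variance (W j) P = σ2 / (I j).card := by
      intro j
      have hfun : W j = fun ω => (1 / ((I j).card : ℝ)) * (∑ i ∈ I j, Z i) ω := by
        funext ω; rw [hW j]; simp [Finset.sum_apply]
      rw [hfun, variance_const_mul]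
      rw [IndepFun.variance_sum (fun i _ => hmem i) (fun i _ l _ hil => hiid.indepFun hil)]
      have hsum : ∑ i ∈ I j, variance (Z i) P = ((I j).card : ℝ) * σ2 := by
        rw [Finset.sum_congr rfl fun i _ => (hid' i).variance_eq, Finset.sum_const,
          nsmul_eq_mul]
      rw [hsum]
      have hc := ccast j
      have hc := ccast j
      rw [div_pow, one_pow, div_mul_eq_mul_div, div_eq_div_iff (pow_ne_zero 2 hc) hc]
      ring
    have hNc : ∀ j, (N : ℝ) ≤ 2 * (1 + L) * (I j).card := by
      intro j
      have e1 : n * (N / n) + N % n = N := Nat.div_add_mod N n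
      have e2 : N % n < n := Nat.mod_lt N npos
      have e3 : N < n * (N / n) + n := by
        calc N = n * (N / n) + N % n := e1.symm
          _ < n * (N / n) + n := Nat.add_lt_add_left e2 _
      have e3' : (N : ℝ) < (n : ℝ) * ((N / n : ℕ) : ℝ) + n := by exact_mod_cast e3
      have e4 : (n : ℝ) * 1 ≤ (n : ℝ) * ((N / n : ℕ) : ℝ) := by
        apply mul_le_mul_of_nonneg_left _ (Nat.cast_nonneg n)
        exact_mod_cast Nat.one_le_iff_ne_zero.mpr (by omega)
      have e5 : (n : ℝ) * ((N / n : ℕ) : ℝ) ≤ (n : ℝ) * ((I j).card : ℝ) := by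
        apply mul_le_mul_of_nonneg_left _ (Nat.cast_nonneg n)
        exact_mod_cast hsize j
      have e6 : (n : ℝ) * ((I j).card : ℝ) ≤ (1 + L) * ((I j).card : ℝ) := by
        apply mul_le_mul_of_nonneg_right _ (Nat.cast_nonneg _)
        linarith
      nlinarith
    have hcheb : ∀ j, P (W j ⁻¹' Cset) ≤ ENNReal.ofReal (1 / (4 * e ^ 2)) := by
      intro j
      have h1 : P (W j ⁻¹' Cset) ≤ P {ω | t ≤ |W j ω - ∫ x, W j x ∂P|} := by
        apply measure_mono
        intro ω hω
        simp only [Set.mem_preimage, hC, Set.mem_setOf_eq] at hω ⊢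
        rw [hEW j]
        exact le_of_lt hω
      refine h1.trans ((meas_ge_le_variance_div_sq (hWmem j) tpos).trans ?_)
      apply ENNReal.ofReal_le_ofReal
      rw [hVarW j]
      have ha : Real.sqrt (2 * σ2) ^ 2 = 2 * σ2 := Real.sq_sqrt (by linarith)
      have hb : Real.sqrt ((1 + L) / N) ^ 2 = (1 + L) / N :=
        Real.sq_sqrt (div_nonneg h1L.le (Nat.cast_nonneg N))
      have ht2 : t ^ 2 = 2 ^ 2 * e ^ 2 * (2 * σ2) * ((1 + L) / N) := by
        calc t ^ 2 = 2 ^ 2 * e ^ 2 * Real.sqrt (2 * σ2) ^ 2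
            * Real.sqrt ((1 + L) / N) ^ 2 := by rw [ht]; ring
          _ = 2 ^ 2 * e ^ 2 * (2 * σ2) * ((1 + L) / N) := by rw [ha, hb]
      have hcpos : (0:ℝ) < (I j).card := by exact_mod_cast cpos j
      have hNpos : (0:ℝ) < N := Nat.cast_pos.mpr Npos
      have he2 : (0:ℝ) < e ^ 2 := pow_pos hepos 2
      have hden : (0:ℝ) < ((I j).card : ℝ) * t ^ 2 := mul_pos hcpos (pow_pos tpos 2)
      rw [div_div, div_le_div_iff₀ hden (by linarith : (0:ℝ) < 4 * e ^ 2), ht2]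
      have hkey : ((I j).card : ℝ) * (2 ^ 2 * e ^ 2 * (2 * σ2) * ((1 + L) / N))
          = ((I j).card : ℝ) * (1 + L) * (8 * e ^ 2 * σ2) / N := by ring
      rw [one_mul, hkey, le_div_iff₀ hNpos]
      have hσ2' : (0:ℝ) < σ2 := hσpos
      have hfac : (0:ℝ) ≤ 4 * e ^ 2 * σ2 := mul_nonneg (by positivity) hσ2'.le
      linarith [mul_le_mul_of_nonneg_left (hNc j) hfac]
    have hprod : ∀ S : Finset (Fin n), P (⋂ j ∈ S, W j ⁻¹' Cset) = ∏ j ∈ S, P (W j ⁻¹' Cset) := by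
      intro S
      induction S using Finset.induction_on with
      | empty => simp
      | @insert j S hjS IH =>
        rw [Finset.set_biInter_insert, Finset.prod_insert hjS, ← IH]
        have hdisjT : Disjoint (I j) (S.biUnion I) := by
          rw [Finset.disjoint_biUnion_right]
          exact fun l hl => hdisj j l (fun h => hjS (h ▸ hl))
        have hind := hiid.indepFun_finset (I j) (S.biUnion I) hdisjT hmeas
        refine hind.meas_inter ?_ ?_
        · refine ⟨(fun v : {x // x ∈ I j} → ℝ =>
              (1 / ((I j).card : ℝ)) * ∑ i, v i) ⁻¹' Cset,
            ((Finset.measurable_sum Finset.univ fun i _ =>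
              measurable_pi_apply i).const_mul _) hCmeas, ?_⟩
          ext ω
          simp only [Set.mem_preimage]
          have hval : (1 / ((I j).card : ℝ)) * ∑ i : {x // x ∈ I j}, Z i ω = W j ω := by
            rw [hW j]
            congr 1
            exact Finset.sum_coe_sort (I j) fun i => Z i ω
          rw [hval]
        · refine ⟨⋂ l ∈ S, (fun v : {x // x ∈ S.biUnion I} → ℝ =>
              (1 / ((I l).card : ℝ)) * ∑ i ∈ (I l).attach,
                if h : (i : Fin N) ∈ S.biUnion I then v ⟨i, h⟩ else 0) ⁻¹' Cset, ?_, ?_⟩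
          · refine MeasurableSet.biInter S.countable_toSet fun l _ => ?_
            refine Measurable.const_mul (Finset.measurable_sum _ fun i _ => ?_) _ hCmeas
            by_cases h : (i : Fin N) ∈ S.biUnion I
            · simp only [dif_pos h]
              exact measurable_pi_apply _
            · simp only [dif_neg h]
              exact measurable_const
          · have hval : ∀ l ∈ S, ∀ ω : Ω,
                (1 / ((I l).card : ℝ)) * (∑ i ∈ (I l).attach,
                  if h : (i : Fin N) ∈ S.biUnion I then Z i ω else 0) = W l ω := by
              intro l hl ω
              rw [hW l]
              congr 1
              calc (∑ i ∈ (I l).attach,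
                    if h : (i : Fin N) ∈ S.biUnion I then Z i ω else 0)
                  = ∑ i ∈ (I l).attach, Z i ω :=
                    Finset.sum_congr rfl fun i _ =>
                      dif_pos (Finset.mem_biUnion.mpr ⟨l, hl, i.2⟩)
                _ = ∑ i ∈ I l, Z i ω := Finset.sum_attach (I l) (fun i => Z i ω)
            ext ω
            simp only [Set.preimage_iInter, Set.mem_iInter, Set.mem_preimage]
            exact forall_congr' fun l => forall_congr' fun hl => by rw [hval l hl ω]
    have hsub : {ω | t < |μhat ω - m|} ⊆
        ⋃ S ∈ Finset.powersetCard k (Finset.univ : Finset (Fin n)), ⋂ j ∈ S, W j ⁻¹' Cset := by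
      intro ω hω
      simp only [Set.mem_setOf_eq] at hω
      have hcard : k ≤ (Finset.univ.filter fun j => W j ω ∈ Cset).card := by
        rcases lt_abs.mp hω with h | h
        · have hsub2 : (Finset.univ.filter fun j => μhat ω ≤ W j ω) ⊆
              Finset.univ.filter fun j => W j ω ∈ Cset := by
            intro j hj
            simp only [Finset.mem_filter, Finset.mem_univ, true_and] at hj ⊢
            simp only [hC, Set.mem_setOf_eq]
            exact lt_of_lt_of_le (by linarith) (le_abs_self _)
          have h1 := (hmed ω).2
          have h2 := Finset.card_le_card hsub2
          omega
        · have hsub2 : (Finset.univ.filter fun j => W j ω ≤ μhat ω) ⊆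
              Finset.univ.filter fun j => W j ω ∈ Cset := by
            intro j hj
            simp only [Finset.mem_filter, Finset.mem_univ, true_and] at hj ⊢
            simp only [hC, Set.mem_setOf_eq]
            exact lt_of_lt_of_le (by linarith) (neg_le_abs _)
          have h1 := (hmed ω).1
          have h2 := Finset.card_le_card hsub2
          omega
      obtain ⟨S, hS1, hS2⟩ := Finset.exists_subset_card_eq hcard
      refine Set.mem_iUnion₂.mpr ⟨S, Finset.mem_powersetCard.mpr ⟨Finset.subset_univ S, hS2⟩, ?_⟩
      refine Set.mem_iInter₂.mpr fun j hj => ?_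
      have := hS1 hj
      simp only [Finset.mem_filter, Finset.mem_univ, true_and] at this
      exact this
    refine le_trans (measure_mono hsub) ?_
    refine le_trans (measure_biUnion_finset_le _ _) ?_
    have hbound : ∀ S ∈ Finset.powersetCard k (Finset.univ : Finset (Fin n)),
        P (⋂ j ∈ S, W j ⁻¹' Cset) ≤ ENNReal.ofReal (1 / (4 * e ^ 2)) ^ k := by
      intro S hS
      rw [hprod S]
      obtain ⟨-, hcard⟩ := Finset.mem_powersetCard.mp hS
      calc ∏ j ∈ S, P (W j ⁻¹' Cset) ≤ ∏ _j ∈ S, ENNReal.ofReal (1 / (4 * e ^ 2)) :=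
            Finset.prod_le_prod' fun j _ => hcheb j
        _ = ENNReal.ofReal (1 / (4 * e ^ 2)) ^ k := by rw [Finset.prod_const, hcard]
    refine le_trans (Finset.sum_le_sum hbound) ?_
    rw [Finset.sum_const, Finset.card_powersetCard, Finset.card_univ, Fintype.card_fin,
      nsmul_eq_mul]
    have hpnn : (0:ℝ) ≤ 1 / (4 * e ^ 2) := by positivity
    rw [← ENNReal.ofReal_pow hpnn, ← ENNReal.ofReal_natCast (n.choose k),
      ← ENNReal.ofReal_mul (Nat.cast_nonneg _)]
    apply ENNReal.ofReal_le_ofReal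
    have hch : ((n.choose k : ℕ) : ℝ) ≤ 2 ^ n := by
      have h1 : n.choose k ≤ 2 ^ n := by
        calc n.choose k ≤ ∑ i ∈ Finset.range (n + 1), n.choose i :=
              Finset.single_le_sum (fun i _ => Nat.zero_le _) (Finset.mem_range.mpr (by omega))
          _ = 2 ^ n := Nat.sum_range_choose n
      exact_mod_cast h1
    have he2 : e ^ 2 = Real.exp 2 := by rw [he, ← Real.exp_nat_mul]; norm_num
    have hp : (1 / (4 * e ^ 2)) ^ k = (1 / 4 : ℝ) ^ k * Real.exp (-(2 * k)) := by
      have h1 : (1 : ℝ) / (4 * e ^ 2) = (1 / 4) * Real.exp (-2) := by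
        rw [he2, Real.exp_neg]
        ring
      rw [h1, mul_pow, ← Real.exp_nat_mul]
      congr 1
      push_cast
      ring
    rw [hp]
    calc ((n.choose k : ℕ) : ℝ) * ((1 / 4 : ℝ) ^ k * Real.exp (-(2 * k)))
        ≤ 2 ^ n * ((1 / 4 : ℝ) ^ k * Real.exp (-(2 * k))) := by
          apply mul_le_mul_of_nonneg_right hch
          positivity
      _ ≤ 2 ^ n * ((1 / 2 : ℝ) ^ n * Real.exp (-(n : ℝ))) := by
          apply mul_le_mul_of_nonneg_left _ (by positivity)
          have h14 : ((1 : ℝ) / 4) ^ k = (1 / 2 : ℝ) ^ (2 * k) := by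
            rw [pow_mul]
            norm_num
          apply mul_le_mul
          · rw [h14]
            exact pow_le_pow_of_le_one (by norm_num) (by norm_num) h2k
          · apply Real.exp_le_exp.mpr
            have : (n : ℝ) ≤ 2 * k := by exact_mod_cast h2k
            linarith
          · exact (Real.exp_pos _).le
          · positivity
      _ = Real.exp (-(n : ℝ)) := by
          rw [← mul_assoc, ← mul_pow]
          norm_num
      _ ≤ δ := by
          rw [← Real.exp_log δpos]
          apply Real.exp_le_exp.mpr
          have hlog : Real.log δ = -L := by rw [hLdef, one_div, Real.log_inv, neg_neg]
          rw [hlog]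
          linarith
end

section
/- For 1 ≤ s ≤ n let V_s be the set of s-sparse vectors in the Euclidean unit sphere of R^n. Then conv(V_s) ⊂ √s·B_1^n ∩ B_2^n ⊂ C·conv(V_s) for an absolute constant C, where B_1^n and B_2^n are the unit balls of ℓ_1^n and ℓ_2^n respectively. -/
open Metric Pointwise

/-- The set of `s`-sparse unit vectors in `ℝⁿ`. -/
def sparseSphere (n s : ℕ) : Set (EuclideanSpace ℝ (Fin n)) :=
  {x | ‖x‖ = 1 ∧ {i | x i ≠ 0}.ncard ≤ s}


/-- Convex hull of a compact set in a finite-dimensional normed space is compact. -/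
theorem myIsCompact_convexHull {E : Type*} [NormedAddCommGroup E] [NormedSpace ℝ E]
    [FiniteDimensional ℝ E] {V : Set E} (hV : IsCompact V) :
    IsCompact (convexHull ℝ V) := by
  rcases V.eq_empty_or_nonempty with h | ⟨v₀, hv₀⟩
  · simp [h]
  set m := Module.finrank ℝ E + 1 with hm
  set φ : (Fin m → ℝ) × (Fin m → E) → E := fun p => ∑ i, p.1 i • p.2 i with hφ
  have hcont : Continuous φ := by
    apply continuous_finset_sum
    intro i _
    exact ((continuous_apply i).comp continuous_fst).smul
      ((continuous_apply i).comp continuous_snd)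
  have hDc : IsCompact (stdSimplex ℝ (Fin m) ×ˢ Set.univ.pi fun _ : Fin m => V) :=
    (isCompact_stdSimplex ℝ (Fin m)).prod (isCompact_univ_pi fun _ => hV)
  have himg : convexHull ℝ V = φ '' (stdSimplex ℝ (Fin m) ×ˢ Set.univ.pi fun _ : Fin m => V) := by
    apply Set.Subset.antisymm
    · intro x hx
      obtain ⟨ι, hfin, z, w, hrange, hind, hpos, hsum, hcomb⟩ :=
        eq_pos_convex_span_of_mem_convexHull hx
      have hcard : Fintype.card ι ≤ m := by
        have h1 : Fintype.card ι ≤ Module.finrank ℝ (vectorSpan ℝ (Set.range z)) + 1 :=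
          hind.card_le_finrank_succ
        have h2 := Submodule.finrank_le (vectorSpan ℝ (Set.range z))
        omega
      set c := Fintype.card ι with hc
      let e : ι ≃ Fin c := Fintype.equivFin ι
      let eqv : Fin c ⊕ Fin (m - c) ≃ Fin m :=
        finSumFinEquiv.trans (finCongr (by omega))
      let W : Fin c ⊕ Fin (m - c) → ℝ := Sum.elim (w ∘ e.symm) fun _ => 0
      let Z : Fin c ⊕ Fin (m - c) → E := Sum.elim (z ∘ e.symm) fun _ => v₀
      refine ⟨(fun j => W (eqv.symm j), fun j => Z (eqv.symm j)), ⟨⟨?_, ?_⟩, ?_⟩, ?_⟩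
      · intro j
        rcases h : (eqv.symm j) with q | q <;> simp [W, h, le_of_lt (hpos _)]
      · show ∑ j, W (eqv.symm j) = 1
        rw [Equiv.sum_comp eqv.symm W, Fintype.sum_sum_type]
        simp only [W, Sum.elim_inl, Sum.elim_inr, Function.comp_apply,
          Finset.sum_const_zero, add_zero]
        rw [Equiv.sum_comp e.symm w]
        exact hsum
      · intro j _
        show Z (eqv.symm j) ∈ V
        rcases h : (eqv.symm j) with q | q <;> simp only [Z, h, Sum.elim_inl, Sum.elim_inr,
          Function.comp_apply]
        · exact hrange (Set.mem_range_self _)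
        · exact hv₀
      · show ∑ j, W (eqv.symm j) • Z (eqv.symm j) = x
        rw [Equiv.sum_comp eqv.symm (fun q => W q • Z q), Fintype.sum_sum_type]
        simp only [W, Z, Sum.elim_inl, Sum.elim_inr, Function.comp_apply, zero_smul,
          Finset.sum_const_zero, add_zero]
        rw [Equiv.sum_comp e.symm (fun i => w i • z i)]
        exact hcomb
    · rintro x ⟨⟨ws, zs⟩, ⟨hsimp, hzmem⟩, rfl⟩
      exact (convex_convexHull ℝ V).sum_mem (fun i _ => hsimp.1 i) hsimp.2
        (fun i _ => subset_convexHull ℝ V (hzmem i (Set.mem_univ i)))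
  rw [himg]; exact hDc.image hcont

/-- choose a set of `s` coordinates carrying the largest values of `g`. -/
theorem exists_top_coords {n : ℕ} (g : Fin n → ℝ) :
    ∀ s : ℕ, s ≤ n → ∃ S : Finset (Fin n), S.card = s ∧ ∀ i ∈ S, ∀ j ∉ S, g j ≤ g i := by
  intro s
  induction s with
  | zero => exact fun _ => ⟨∅, rfl, by simp⟩
  | succ s ih =>
    intro hs
    obtain ⟨S, hcard, htop⟩ := ih (by omega)
    have hne : (Finset.univ \ S).Nonempty := by
      rw [← Finset.card_pos, Finset.card_sdiff_of_subset (Finset.subset_univ S)]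
      simp [hcard]
      omega
    obtain ⟨j₀, hj₀, hj₀max⟩ := Finset.exists_max_image (Finset.univ \ S) g hne
    have hj₀S : j₀ ∉ S := (Finset.mem_sdiff.mp hj₀).2
    refine ⟨insert j₀ S, by rw [Finset.card_insert_of_notMem hj₀S, hcard], ?_⟩
    intro i hi j hj
    have hjS : j ∉ S := fun h => hj (Finset.mem_insert_of_mem h)
    rcases Finset.mem_insert.mp hi with rfl | hiS
    · exact hj₀max j (Finset.mem_sdiff.mpr ⟨Finset.mem_univ j, hjS⟩)
    · exact htop i hiS j hjS

theorem isCompact_sparseSphere (n s : ℕ) : IsCompact (sparseSphere n s) := by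
  classical
  apply Metric.isCompact_of_isClosed_isBounded
  · have h1 : IsClosed {x : EuclideanSpace ℝ (Fin n) | ‖x‖ = 1} :=
      isClosed_eq continuous_norm continuous_const
    have h2 : IsClosed {x : EuclideanSpace ℝ (Fin n) | {i | x i ≠ 0}.ncard ≤ s} := by
      have heq : {x : EuclideanSpace ℝ (Fin n) | {i | x i ≠ 0}.ncard ≤ s} =
          ⋃ T ∈ {T : Finset (Fin n) | T.card ≤ s},
            {x : EuclideanSpace ℝ (Fin n) | ∀ i ∉ T, x i = 0} := by
        ext x
        simp only [Set.mem_setOf_eq, Set.mem_iUnion, exists_prop]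
        constructor
        · intro hx
          refine ⟨(Set.toFinite {i | x i ≠ 0}).toFinset, ?_, ?_⟩
          · rwa [← Set.ncard_eq_toFinset_card _ (Set.toFinite _)]
          · intro i hi
            by_contra h
            exact hi ((Set.Finite.mem_toFinset _).mpr h)
        · rintro ⟨T, hT, hsupp⟩
          calc {i | x i ≠ 0}.ncard ≤ (T : Set (Fin n)).ncard := by
                apply Set.ncard_le_ncard _ (T : Set (Fin n)).toFinite
                intro i hi
                by_contra h
                exact hi (hsupp i (by simpa using h))
            _ = T.card := Set.ncard_coe_finset T
            _ ≤ s := hT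
      rw [heq]
      apply Set.Finite.isClosed_biUnion (Set.toFinite _)
      intro T _
      have : {x : EuclideanSpace ℝ (Fin n) | ∀ i ∉ T, x i = 0} =
          ⋂ i ∈ {i : Fin n | i ∉ T}, {x : EuclideanSpace ℝ (Fin n) | x i = 0} := by
        ext x; simp
      rw [this]
      apply isClosed_biInter
      intro i _
      exact isClosed_eq (EuclideanSpace.proj i).continuous continuous_const
    exact h1.inter h2
  · apply Bornology.IsBounded.subset (Metric.isBounded_closedBall (x := (0:EuclideanSpace ℝ (Fin n))) (r := 1))
    intro x hx
    simp only [sparseSphere, Set.mem_setOf_eq] at hx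
    simp [Metric.mem_closedBall, dist_zero_right, hx.1]

/-- If a vector has `≤ s` nonzero coordinates and norm `≤ 1`, its `ℓ¹` norm is `≤ √s`. -/
theorem sum_abs_le_sqrt_of_sparse {n s : ℕ} {v : EuclideanSpace ℝ (Fin n)} (hnorm : ‖v‖ ≤ 1)
    (hs : {i | v i ≠ 0}.ncard ≤ s) : ∑ i, |v i| ≤ Real.sqrt s := by
  classical
  set T := (Set.toFinite {i | v i ≠ 0}).toFinset with hT
  have hTcard : T.card ≤ s := by
    rw [← Set.ncard_eq_toFinset_card _ (Set.toFinite _)]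
    exact hs
  have hsum : ∑ i, |v i| = ∑ i ∈ T, |v i| := by
    refine (Finset.sum_subset (Finset.subset_univ T) ?_).symm
    intro i _ hi
    have : v i = 0 := by
      by_contra h
      exact hi ((Set.Finite.mem_toFinset _).mpr h)
    simp [this]
  have hnsq : ∑ i, (v i) ^ 2 ≤ 1 := by
    have h1 : ‖v‖ ^ 2 = ∑ i, (v i) ^ 2 := by
      rw [EuclideanSpace.norm_eq, Real.sq_sqrt (Finset.sum_nonneg fun i _ => sq_nonneg _)]
      simp [Real.norm_eq_abs, sq_abs]
    nlinarith [norm_nonneg v]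
  have hCS : (∑ i ∈ T, |v i| * 1) ^ 2 ≤ (∑ i ∈ T, |v i| ^ 2) * (∑ i ∈ T, (1:ℝ) ^ 2) :=
    Finset.sum_mul_sq_le_sq_mul_sq T _ _
  have h2 : ∑ i ∈ T, |v i| ^ 2 ≤ 1 := by
    have he : ∑ i ∈ T, |v i| ^ 2 = ∑ i ∈ T, (v i) ^ 2 :=
      Finset.sum_congr rfl fun i _ => sq_abs _
    rw [he]
    exact le_trans (Finset.sum_le_sum_of_subset_of_nonneg (Finset.subset_univ T)
      fun i _ _ => sq_nonneg _) hnsq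
  have h3 : (∑ i ∈ T, (1:ℝ) ^ 2) = T.card := by simp
  have h4 : (∑ i ∈ T, |v i|) ^ 2 ≤ (s : ℝ) := by
    have hTs : (T.card : ℝ) ≤ (s : ℝ) := by exact_mod_cast hTcard
    calc (∑ i ∈ T, |v i|) ^ 2 = (∑ i ∈ T, |v i| * 1) ^ 2 := by simp
      _ ≤ (∑ i ∈ T, |v i| ^ 2) * (∑ i ∈ T, (1:ℝ) ^ 2) := hCS
      _ ≤ 1 * (s:ℝ) := by
          rw [h3]
          apply mul_le_mul h2 hTs (by positivity) one_pos.le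
      _ = (s:ℝ) := one_mul _
  have h5 : (0:ℝ) ≤ ∑ i ∈ T, |v i| := Finset.sum_nonneg fun i _ => abs_nonneg _
  rw [hsum]
  calc ∑ i ∈ T, |v i| = Real.sqrt ((∑ i ∈ T, |v i|) ^ 2) := (Real.sqrt_sq h5).symm
    _ ≤ Real.sqrt s := Real.sqrt_le_sqrt h4

theorem firstIncl {n s : ℕ} :
    convexHull ℝ (sparseSphere n s)
        ⊆ {x : EuclideanSpace ℝ (Fin n) | ∑ i, |x i| ≤ Real.sqrt s} ∩ closedBall 0 1 := by
  apply convexHull_min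
  · intro v hv
    obtain ⟨hv1, hv2⟩ := hv
    constructor
    · exact sum_abs_le_sqrt_of_sparse (le_of_eq hv1) hv2
    · rw [mem_closedBall_zero_iff, hv1]
  · apply Convex.inter _ (convex_closedBall 0 1)
    intro x hx y hy a b ha hb hab
    simp only [Set.mem_setOf_eq] at hx hy ⊢
    calc ∑ i, |(a • x + b • y) i| ≤ ∑ i, (a * |x i| + b * |y i|) := by
          apply Finset.sum_le_sum
          intro i _
          have hco : (a • x + b • y) i = a * x i + b * y i := rfl
          rw [hco]
          calc |a * x i + b * y i| ≤ |a * x i| + |b * y i| := abs_add_le _ _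
            _ = a * |x i| + b * |y i| := by
                rw [abs_mul, abs_mul, abs_of_nonneg ha, abs_of_nonneg hb]
      _ = a * ∑ i, |x i| + b * ∑ i, |y i| := by
          rw [Finset.sum_add_distrib, Finset.mul_sum, Finset.mul_sum]
      _ ≤ a * Real.sqrt s + b * Real.sqrt s :=
          add_le_add (mul_le_mul_of_nonneg_left hx ha) (mul_le_mul_of_nonneg_left hy hb)
      _ = Real.sqrt s := by rw [← add_mul, hab, one_mul]

theorem zero_mem_hull {n s : ℕ} (hs1 : 1 ≤ s) (hn : 1 ≤ n) :
    (0 : EuclideanSpace ℝ (Fin n)) ∈ convexHull ℝ (sparseSphere n s) := by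
  have hi₀ : 0 < n := hn
  set i₀ : Fin n := ⟨0, hi₀⟩
  set e : EuclideanSpace ℝ (Fin n) := EuclideanSpace.single i₀ 1 with he
  have hsupp : {j | e j ≠ 0}.ncard ≤ s := by
    have hsub : {j | e j ≠ 0} ⊆ {i₀} := by
      intro j hj
      simp only [Set.mem_setOf_eq, he, EuclideanSpace.single_apply] at hj
      by_contra hne
      simp only [Set.mem_singleton_iff] at hne
      simp [hne] at hj
    calc {j | e j ≠ 0}.ncard ≤ ({i₀} : Set (Fin n)).ncard :=
          Set.ncard_le_ncard hsub (Set.finite_singleton _)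
      _ = 1 := Set.ncard_singleton _
      _ ≤ s := hs1
  have heV : e ∈ sparseSphere n s := by
    refine ⟨?_, hsupp⟩
    rw [he, EuclideanSpace.norm_single]
    norm_num
  have hneV : -e ∈ sparseSphere n s := by
    constructor
    · rw [norm_neg]
      exact heV.1
    · have hset : {j | (-e) j ≠ 0} = {j | e j ≠ 0} := by
        ext j
        have : (-e) j = -(e j) := rfl
        simp [this]
      rw [hset]
      exact hsupp
  have h := (convex_convexHull ℝ (sparseSphere n s))
    (subset_convexHull ℝ _ heV) (subset_convexHull ℝ _ hneV)
    (by norm_num : (0:ℝ) ≤ 1/2) (by norm_num : (0:ℝ) ≤ 1/2) (by norm_num)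
  simpa [smul_neg] using h
theorem secondIncl {n s : ℕ} (hs1 : 1 ≤ s) (hsn : s ≤ n) :
    {x : EuclideanSpace ℝ (Fin n) | ∑ i, |x i| ≤ Real.sqrt s} ∩ closedBall 0 1
        ⊆ (2:ℝ) • convexHull ℝ (sparseSphere n s) := by
  classical
  set K := convexHull ℝ (sparseSphere n s) with hK
  rintro x ⟨hx1, hx2⟩
  simp only [Set.mem_setOf_eq] at hx1
  rw [mem_closedBall_zero_iff] at hx2
  by_contra hxK
  have hKc : IsCompact K := myIsCompact_convexHull (isCompact_sparseSphere n s)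
  have h2Kcl : IsClosed ((2:ℝ) • K) := (hKc.smul (2:ℝ)).isClosed
  have h2Kconv : Convex ℝ ((2:ℝ) • K) := (convex_convexHull ℝ _).smul 2
  obtain ⟨f, u, hfu, hux⟩ := geometric_hahn_banach_closed_point h2Kconv h2Kcl hxK
  have h0K : (0 : EuclideanSpace ℝ (Fin n)) ∈ (2:ℝ) • K :=
    ⟨0, zero_mem_hull hs1 (le_trans hs1 hsn), smul_zero 2⟩
  have hu0 : (0:ℝ) < u := by simpa using hfu 0 h0K
  -- represent f by a vector t
  obtain ⟨t, hft⟩ : ∃ t : EuclideanSpace ℝ (Fin n), ∀ y, f y = ∑ i, t i * y i := by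
    refine ⟨(InnerProductSpace.toDual ℝ (EuclideanSpace ℝ (Fin n))).symm f, fun y => ?_⟩
    have h1 : inner ℝ ((InnerProductSpace.toDual ℝ (EuclideanSpace ℝ (Fin n))).symm f) y = f y :=
      InnerProductSpace.toDual_symm_apply
    rw [← h1, PiLp.inner_apply]
    simp [RCLike.inner_apply, starRingEnd_apply]
    exact Finset.sum_congr rfl fun i _ => mul_comm _ _
  obtain ⟨S, hScard, hStop⟩ := exists_top_coords (fun i => |t i|) s hsn
  set r := Real.sqrt (∑ i ∈ S, (t i) ^ 2) with hr
  have hsumnn : (0:ℝ) ≤ ∑ i ∈ S, (t i) ^ 2 := Finset.sum_nonneg fun i _ => sq_nonneg _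
  have hrsq : r ^ 2 = ∑ i ∈ S, (t i) ^ 2 := Real.sq_sqrt hsumnn
  have hr0 : 0 ≤ r := Real.sqrt_nonneg _
  have hSne : S.Nonempty := by
    rw [← Finset.card_pos, hScard]; omega
  -- ‖x‖² ≤ 1
  have hxsq : ∑ i, (x i) ^ 2 ≤ 1 := by
    have h1 : ‖x‖ ^ 2 = ∑ i, (x i) ^ 2 := by
      rw [EuclideanSpace.norm_eq, Real.sq_sqrt (Finset.sum_nonneg fun i _ => sq_nonneg _)]
      simp [Real.norm_eq_abs, sq_abs]
    nlinarith [norm_nonneg x]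
  rcases eq_or_lt_of_le hr0 with hreq | hrpos
  · -- r = 0 : then t = 0 and f x = 0, contradicting 0 < u < f x
    have hsum0 : ∑ i ∈ S, (t i) ^ 2 = 0 := by rw [← hrsq, ← hreq]; norm_num
    have hS0 : ∀ i ∈ S, t i = 0 := by
      intro i hi
      have h := (Finset.sum_eq_zero_iff_of_nonneg fun j _ => sq_nonneg (t j)).mp hsum0 i hi
      exact pow_eq_zero_iff two_ne_zero |>.mp h
    have ht0 : ∀ i, t i = 0 := by
      intro i
      by_cases hi : i ∈ S
      · exact hS0 i hi
      · obtain ⟨i₀, hi₀⟩ := hSne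
        have h1 := hStop i₀ hi₀ i hi
        have h2 : t i₀ = 0 := hS0 i₀ hi₀
        simp only [h2, abs_zero] at h1
        exact abs_nonpos_iff.mp h1
    have hfx0 : f x = 0 := by
      rw [hft]
      simp [ht0]
    rw [hfx0] at hux
    linarith
  · -- r > 0
    set v : EuclideanSpace ℝ (Fin n) := WithLp.toLp 2 (fun i => if i ∈ S then t i / r else 0) with hv
    have hvnorm : ‖v‖ = 1 := by
      rw [EuclideanSpace.norm_eq]
      have hsq : ∑ i, ‖v i‖ ^ 2 = (∑ i ∈ S, (t i) ^ 2) / r ^ 2 := by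
        have h1 : ∀ i, ‖v i‖ ^ 2 = if i ∈ S then (t i) ^ 2 / r ^ 2 else 0 := by
          intro i
          by_cases hi : i ∈ S <;> simp [hv, hi, Real.norm_eq_abs, sq_abs, div_pow]
        rw [Finset.sum_congr rfl fun i _ => h1 i, Finset.sum_ite_mem, Finset.univ_inter,
          ← Finset.sum_div]
      rw [hsq, ← hrsq, div_self (by positivity)]
      exact Real.sqrt_one
    have hvsupp : {i | v i ≠ 0}.ncard ≤ s := by
      have hsub : {i | v i ≠ 0} ⊆ (S : Set (Fin n)) := by
        intro i hi
        simp only [Set.mem_setOf_eq, hv] at hi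
        by_contra h
        have h' : i ∉ S := by simpa using h
        simp [h'] at hi
      calc {i | v i ≠ 0}.ncard ≤ (S : Set (Fin n)).ncard :=
            Set.ncard_le_ncard hsub (S : Set (Fin n)).toFinite
        _ = S.card := Set.ncard_coe_finset S
        _ = s := hScard
    have hvV : v ∈ sparseSphere n s := ⟨hvnorm, hvsupp⟩
    have h2v : (2:ℝ) • v ∈ (2:ℝ) • K :=
      Set.smul_mem_smul_set (subset_convexHull ℝ _ hvV)
    have hfv : f ((2:ℝ) • v) = 2 * r := by
      rw [map_smul, smul_eq_mul, hft]
      congr 1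
      have h1 : ∀ i, t i * v i = if i ∈ S then (t i) ^ 2 / r else 0 := by
        intro i
        by_cases hi : i ∈ S <;> simp [hv, hi] <;> ring
      rw [Finset.sum_congr rfl fun i _ => h1 i, Finset.sum_ite_mem, Finset.univ_inter,
        ← Finset.sum_div, ← hrsq]
      rw [sq, mul_div_assoc, div_self (ne_of_gt hrpos), mul_one]
    have hlt : 2 * r < u := by rw [← hfv]; exact hfu _ h2v
    -- now show f x ≤ 2 r
    have hsplit : f x = ∑ i ∈ Finset.univ \ S, t i * x i + ∑ i ∈ S, t i * x i := by
      rw [hft, ← Finset.sum_sdiff (Finset.subset_univ S)]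
    have hterm1 : ∑ i ∈ S, t i * x i ≤ r := by
      have hCS : (∑ i ∈ S, t i * x i) ^ 2 ≤ (∑ i ∈ S, (t i) ^ 2) * (∑ i ∈ S, (x i) ^ 2) :=
        Finset.sum_mul_sq_le_sq_mul_sq S _ _
      have hx2' : ∑ i ∈ S, (x i) ^ 2 ≤ 1 :=
        le_trans (Finset.sum_le_sum_of_subset_of_nonneg (Finset.subset_univ S)
          fun i _ _ => sq_nonneg _) hxsq
      have hx2nn : (0:ℝ) ≤ ∑ i ∈ S, (x i) ^ 2 := Finset.sum_nonneg fun i _ => sq_nonneg _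
      nlinarith
    have hterm2 : ∑ i ∈ Finset.univ \ S, t i * x i ≤ r := by
      rcases Finset.eq_empty_or_nonempty (Finset.univ \ S) with hemp | hne
      · rw [hemp, Finset.sum_empty]
        exact hr0
      · obtain ⟨j₀, hj₀mem, hj₀max⟩ := Finset.exists_max_image _ (fun j => |t j|) hne
        set M := |t j₀| with hM
        have hM0 : 0 ≤ M := abs_nonneg _
        have hj₀S : j₀ ∉ S := (Finset.mem_sdiff.mp hj₀mem).2
        have hMr : M * Real.sqrt s ≤ r := by
          have h1 : ∀ i ∈ S, M ^ 2 ≤ (t i) ^ 2 := by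
            intro i hi
            have := hStop i hi j₀ hj₀S
            nlinarith [abs_nonneg (t i), sq_abs (t i), sq_abs (t j₀)]
          have h2 : (s : ℝ) * M ^ 2 ≤ r ^ 2 := by
            rw [hrsq]
            calc (s:ℝ) * M ^ 2 = ∑ _i ∈ S, M ^ 2 := by
                  rw [Finset.sum_const, hScard, nsmul_eq_mul]
              _ ≤ ∑ i ∈ S, (t i) ^ 2 := Finset.sum_le_sum h1
          have h3 : (M * Real.sqrt s) ^ 2 ≤ r ^ 2 := by
            have hss : (Real.sqrt s) ^ 2 = (s:ℝ) := Real.sq_sqrt (Nat.cast_nonneg s)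
            calc (M * Real.sqrt s) ^ 2 = (s:ℝ) * M ^ 2 := by rw [mul_pow, hss]; ring
              _ ≤ r ^ 2 := h2
          have h4 := Real.sqrt_le_sqrt h3
          rwa [Real.sqrt_sq (mul_nonneg hM0 (Real.sqrt_nonneg _)), Real.sqrt_sq hr0] at h4
        calc ∑ i ∈ Finset.univ \ S, t i * x i ≤ ∑ i ∈ Finset.univ \ S, M * |x i| := by
              apply Finset.sum_le_sum
              intro i hi
              calc t i * x i ≤ |t i * x i| := le_abs_self _
                _ = |t i| * |x i| := abs_mul _ _
                _ ≤ M * |x i| := mul_le_mul_of_nonneg_right (hj₀max i hi) (abs_nonneg _)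
          _ ≤ ∑ i, M * |x i| := by
              apply Finset.sum_le_sum_of_subset_of_nonneg (Finset.sdiff_subset)
              intro i _ _
              exact mul_nonneg hM0 (abs_nonneg _)
          _ = M * ∑ i, |x i| := (Finset.mul_sum _ _ _).symm
          _ ≤ M * Real.sqrt s := mul_le_mul_of_nonneg_left hx1 hM0
          _ ≤ r := hMr
    have hfx : f x ≤ 2 * r := by
      rw [hsplit]
      linarith
    linarith


/-- `conv(V_s) ⊆ √s B₁ⁿ ∩ B₂ⁿ ⊆ C·conv(V_s)` for an absolute constant `C`, where `V_s` is
the set of `s`-sparse vectors on the Euclidean unit sphere. -/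
theorem sparse_convex_hull_equivalence :
    ∃ C : ℝ, 0 < C ∧
      ∀ (n s : ℕ), 1 ≤ s → s ≤ n →
        convexHull ℝ (sparseSphere n s)
            ⊆ {x : EuclideanSpace ℝ (Fin n) | ∑ i, |x i| ≤ Real.sqrt s}
              ∩ closedBall 0 1 ∧
        {x : EuclideanSpace ℝ (Fin n) | ∑ i, |x i| ≤ Real.sqrt s} ∩ closedBall 0 1
            ⊆ C • convexHull ℝ (sparseSphere n s) := by
  exact ⟨2, by norm_num, fun n s hs1 hsn => ⟨firstIncl, secondIncl hs1 hsn⟩⟩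
end
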